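/- Let P be an (s,k)-puzzle that is a strong uniquely solvable puzzle with k > 1. Then there exists a (⌈s/3⌉, k−1)-puzzle that is a strong uniquely solvable puzzle. -/
import Mathlib


/-- Exactly two of the three propositions hold. -/
def ExactlyTwo (A B C : Prop) : Prop :=
  (A ∧ B ∧ ¬C) ∨ (A ∧ ¬B ∧ C) ∨ (¬A ∧ B ∧ C)

/-- At least two of the three propositions hold. -/
def AtLeastTwo (A B C : Prop) : Prop :=
  (A ∧ B) ∨ (A ∧ C) ∨ (B ∧ C)

/-- A puzzle of width `k` is a finite set of rows in `{1,2,3}^k`; we use the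
alphabet `Fin 3` whose three elements are denoted `1`, `2`, `3` (`3 = 0`).
`P` is a strong uniquely solvable puzzle (strong USP). -/
def IsSUSP {k : ℕ} (P : Finset (Fin k → Fin 3)) : Prop :=
  ∀ π₁ π₂ π₃ : Equiv.Perm {r // r ∈ P},
    (π₁ = π₂ ∧ π₂ = π₃) ∨
    ∃ (r : {r // r ∈ P}) (c : Fin k),
      ExactlyTwo ((π₁ r).1 c = 1) ((π₂ r).1 c = 2) ((π₃ r).1 c = 3)

lemma not_exactlyTwo_same (x : Fin 3) :
    ¬ ExactlyTwo (x = 1) (x = 2) (x = 3) := by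
  rintro (⟨h1, h2, -⟩ | ⟨h1, -, h3⟩ | ⟨-, h2, h3⟩)
  · subst h1; exact absurd h2 (by decide)
  · subst h1; exact absurd h3 (by decide)
  · subst h2; exact absurd h3 (by decide)

lemma isSUSP_subset {k : ℕ} {P Q : Finset (Fin k → Fin 3)}
    (hQP : Q ⊆ P) (hP : IsSUSP P) : IsSUSP Q := by
  intro π₁ π₂ π₃
  let p : {r // r ∈ P} → Prop := fun x => x.1 ∈ Q
  have hpd : DecidablePred p := fun x => Finset.decidableMem _ _
  let f : {r // r ∈ Q} ≃ Subtype p :=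
    { toFun := fun x => ⟨⟨x.1, hQP x.2⟩, x.2⟩
      invFun := fun y => ⟨y.1.1, y.2⟩
      left_inv := fun x => rfl
      right_inv := fun y => rfl }
  rcases hP (π₁.extendDomain f) (π₂.extendDomain f) (π₃.extendDomain f) with
    ⟨h12, h23⟩ | ⟨r, c, h⟩
  · left
    have hinj : Function.Injective
        (fun π : Equiv.Perm {r // r ∈ Q} => π.extendDomain f) := by
      intro a b hab
      apply Equiv.ext
      intro x
      have hx := congrArg (fun π : Equiv.Perm {r // r ∈ P} => π ((f x).1)) hab
      simp only [Equiv.Perm.extendDomain_apply_subtype _ f (f x).2] at hx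
      exact f.injective (Subtype.ext hx)
    exact ⟨hinj h12, hinj h23⟩
  · by_cases hr : r.1 ∈ Q
    · have key : ∀ π : Equiv.Perm {r // r ∈ Q},
          (π.extendDomain f r).1 = (π (f.symm ⟨r, hr⟩)).1 := by
        intro π
        rw [Equiv.Perm.extendDomain_apply_subtype π f hr]
        rfl
      simp only [key] at h
      exact Or.inr ⟨f.symm ⟨r, hr⟩, c, h⟩
    · rw [Equiv.Perm.extendDomain_apply_not_subtype π₁ f hr,
        Equiv.Perm.extendDomain_apply_not_subtype π₂ f hr,
        Equiv.Perm.extendDomain_apply_not_subtype π₃ f hr] at h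
      exact absurd h (not_exactlyTwo_same _)

/-- Downward-closure bound: from an `(s,k)` strong USP with `k > 1` one gets a
`(⌈s/3⌉, k-1)` strong USP. -/
theorem susp_width_reduction {k : ℕ} (P : Finset (Fin k → Fin 3))
    (hP : IsSUSP P) (hk : k > 1) :
    ∃ P' : Finset (Fin (k - 1) → Fin 3),
      P'.card = ⌈(P.card : ℚ) / 3⌉₊ ∧ IsSUSP P' := by
  obtain ⟨m, rfl⟩ : ∃ m, k = m + 1 := ⟨k - 1, by omega⟩
  -- partition by last column
  have hsum : P.card = ∑ v : Fin 3, (P.filter fun g => g (Fin.last m) = v).card :=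
    Finset.card_eq_sum_card_fiberwise (fun g _ => Finset.mem_univ _)
  have hexists : ∃ v : Fin 3, P.card ≤ 3 * (P.filter fun g => g (Fin.last m) = v).card := by
    by_contra hcon
    push_neg at hcon
    have hb : ∀ v ∈ (Finset.univ : Finset (Fin 3)),
        (P.filter fun g => g (Fin.last m) = v).card ≤ (P.card - 1) / 3 := by
      intro v _
      have h := hcon v
      clear * - h
      generalize (P.filter fun g => g (Fin.last m) = v).card = c at h ⊢
      omega
    have h2 : ∑ v : Fin 3, (P.filter fun g => g (Fin.last m) = v).card
        ≤ 3 * ((P.card - 1) / 3) := by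
      have := Finset.sum_le_card_nsmul Finset.univ
        (fun v => (P.filter fun g => g (Fin.last m) = v).card) ((P.card - 1) / 3) hb
      simpa using this
    have h0 : 0 < P.card := lt_of_le_of_lt (Nat.zero_le _) (hcon 0)
    clear * - hsum h2 h0
    generalize hS : (∑ v : Fin 3, (P.filter fun g => g (Fin.last m) = v).card) = S at hsum h2
    clear hS
    omega
  obtain ⟨v, hv⟩ := hexists
  have hceil : ⌈(P.card : ℚ) / 3⌉₊ ≤ (P.filter fun g => g (Fin.last m) = v).card := by
    rw [Nat.ceil_le, div_le_iff₀ (by norm_num : (0:ℚ) < 3)]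
    have : (P.card : ℚ) ≤ 3 * (P.filter fun g => g (Fin.last m) = v).card := by
      exact_mod_cast hv
    linarith
  obtain ⟨Q, hQsub, hQcard⟩ := Finset.exists_subset_card_eq hceil
  have hQP : Q ⊆ P := hQsub.trans (Finset.filter_subset _ _)
  have hQv : ∀ g ∈ Q, g (Fin.last m) = v := fun g hg =>
    (Finset.mem_filter.mp (hQsub hg)).2
  have hQ : IsSUSP Q := isSUSP_subset hQP hP
  -- drop last column
  let ρ : (Fin (m + 1) → Fin 3) → (Fin m → Fin 3) := fun g => g ∘ Fin.castSucc
  have hinj : Set.InjOn ρ Q := by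
    intro a ha b hb hab
    funext i
    induction i using Fin.lastCases with
    | last => rw [hQv a ha, hQv b hb]
    | cast j => exact congrFun hab j
  refine ⟨Q.image ρ, ?_, ?_⟩
  · rw [Finset.card_image_of_injOn hinj, hQcard]
  · intro σ₁ σ₂ σ₃
    let g : {r // r ∈ Q} → {r // r ∈ Q.image ρ} :=
      fun x => ⟨ρ x.1, Finset.mem_image_of_mem ρ x.2⟩
    have hbij : Function.Bijective g := by
      constructor
      · intro a b hab
        exact Subtype.ext (hinj a.2 b.2 (congrArg Subtype.val hab))
      · rintro ⟨y, hy⟩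
        obtain ⟨x, hx, rfl⟩ := Finset.mem_image.mp hy
        exact ⟨⟨x, hx⟩, rfl⟩
    let e : {r // r ∈ Q} ≃ {r // r ∈ Q.image ρ} := Equiv.ofBijective g hbij
    have hes : ∀ y : {r // r ∈ Q.image ρ}, ρ (e.symm y).1 = y.1 := fun y => by
      have := congrArg Subtype.val (e.apply_symm_apply y)
      exact this
    rcases hQ (e.permCongr.symm σ₁) (e.permCongr.symm σ₂) (e.permCongr.symm σ₃) with
      ⟨h12, h23⟩ | ⟨r, c, h⟩
    · exact Or.inl ⟨e.permCongr.symm.injective h12, e.permCongr.symm.injective h23⟩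
    · have key : ∀ (σ : Equiv.Perm {r // r ∈ Q.image ρ}) (j : Fin m),
          ((e.permCongr.symm σ) r).1 (Fin.castSucc j) = (σ (e r)).1 j := by
        intro σ j
        have h1 : (e.permCongr.symm σ) r = e.symm (σ (e r)) := by
          simp [Equiv.permCongr_symm_apply]
        rw [h1]
        exact congrFun (hes (σ (e r))) j
      rcases Fin.eq_castSucc_or_eq_last c with ⟨j, rfl⟩ | rfl
      · rw [key σ₁ j, key σ₂ j, key σ₃ j] at h
        exact Or.inr ⟨e r, j, h⟩
      · have hlast : ∀ σ : Equiv.Perm {r // r ∈ Q.image ρ},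
            ((e.permCongr.symm σ) r).1 (Fin.last m) = v :=
          fun σ => hQv _ ((e.permCongr.symm σ) r).2
        rw [hlast σ₁, hlast σ₂, hlast σ₃] at h
        exact absurd h (not_exactlyTwo_same v)
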